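/- Let c > 0 and θ₀ ∈ ℝ, and fix signs ± consistently. The curve γ : ℝ → ℝ⁵ given by x₁(t) = ±2√c·sech(√c·t)·cos θ₀, x₂(t) = ±2√c·sech(√c·t)·sin θ₀, y₁(t) = ∓2c·sech(√c·t)·tanh(√c·t)·cos θ₀, y₂(t) = ∓2c·sech(√c·t)·tanh(√c·t)·sin θ₀, z(t) = c(1 − 2·sech²(√c·t)) is a solution of the 5-component Maxwell–Bloch system. -/

import Mathlib

/-- For `c > 0`, `θ₀ ∈ ℝ` and a consistent choice of sign `s = ±1`, the curve
`x₁ = ±2√c sech(√c t) cos θ₀`, `x₂ = ±2√c sech(√c t) sin θ₀`,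
`y₁ = ∓2c sech(√c t) tanh(√c t) cos θ₀`, `y₂ = ∓2c sech(√c t) tanh(√c t) sin θ₀`,
`z = c(1 − 2 sech²(√c t))` solves the 5-component Maxwell–Bloch system. -/
theorem maxwell_bloch_homoclinic_solution (c θ₀ s : ℝ) (hc : 0 < c) (hs : s = 1 ∨ s = -1)
    (x1 y1 x2 y2 z : ℝ → ℝ)
    (hx1 : ∀ t, x1 t = s * (2 * Real.sqrt c * (Real.cosh (Real.sqrt c * t))⁻¹ * Real.cos θ₀))
    (hx2 : ∀ t, x2 t = s * (2 * Real.sqrt c * (Real.cosh (Real.sqrt c * t))⁻¹ * Real.sin θ₀))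
    (hy1 : ∀ t, y1 t = -s * (2 * c * (Real.cosh (Real.sqrt c * t))⁻¹ *
      Real.tanh (Real.sqrt c * t) * Real.cos θ₀))
    (hy2 : ∀ t, y2 t = -s * (2 * c * (Real.cosh (Real.sqrt c * t))⁻¹ *
      Real.tanh (Real.sqrt c * t) * Real.sin θ₀))
    (hz : ∀ t, z t = c * (1 - 2 * ((Real.cosh (Real.sqrt c * t))⁻¹) ^ 2)) :
    (∀ t, HasDerivAt x1 (y1 t) t) ∧
    (∀ t, HasDerivAt y1 (x1 t * z t) t) ∧
    (∀ t, HasDerivAt x2 (y2 t) t) ∧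
    (∀ t, HasDerivAt y2 (x2 t * z t) t) ∧
    (∀ t, HasDerivAt z (-(x1 t * y1 t + x2 t * y2 t)) t) := by
  have hs2 : s ^ 2 = 1 := by rcases hs with h | h <;> simp [h]
  set a := Real.sqrt c with ha_def
  have ha : a ^ 2 = c := Real.sq_sqrt hc.le
  have hcosh : ∀ u : ℝ, Real.cosh u ≠ 0 := fun u => (Real.cosh_pos u).ne'
  have hu : ∀ t : ℝ, HasDerivAt (fun t => a * t) a t := fun t => by
    simpa using (hasDerivAt_id t).const_mul a
  have hch : ∀ t : ℝ, HasDerivAt (fun t => Real.cosh (a * t)) (Real.sinh (a * t) * a) t :=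
    fun t => (Real.hasDerivAt_cosh _).comp t (hu t)
  have hsh : ∀ t : ℝ, HasDerivAt (fun t => Real.sinh (a * t)) (Real.cosh (a * t) * a) t :=
    fun t => (Real.hasDerivAt_sinh _).comp t (hu t)
  have hsech : ∀ t : ℝ, HasDerivAt (fun t => (Real.cosh (a * t))⁻¹)
      (-(Real.sinh (a * t) * a) / (Real.cosh (a * t)) ^ 2) t :=
    fun t => (hch t).inv (hcosh _)
  have hrat : ∀ t : ℝ, HasDerivAt (fun t => Real.sinh (a * t) / (Real.cosh (a * t)) ^ 2)
      ((Real.cosh (a * t) * a * (Real.cosh (a * t)) ^ 2 -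
        Real.sinh (a * t) * (2 * (Real.cosh (a * t)) ^ 1 * (Real.sinh (a * t) * a))) /
        ((Real.cosh (a * t)) ^ 2) ^ 2) t :=
    fun t => (hsh t).div ((hch t).pow 2) (pow_ne_zero 2 (hcosh _))
  have hcsq : ∀ u : ℝ, Real.cosh u ^ 2 = Real.sinh u ^ 2 + 1 :=
    fun u => by rw [Real.cosh_sq]
  -- x equations
  have hx : ∀ (x y : ℝ → ℝ) (k : ℝ),
      (∀ t, x t = s * (2 * a * (Real.cosh (a * t))⁻¹ * k)) →
      (∀ t, y t = -s * (2 * c * (Real.cosh (a * t))⁻¹ * Real.tanh (a * t) * k)) →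
      ∀ t, HasDerivAt x (y t) t := by
    intro x y k hx hy t
    have h1 : x = fun t => (s * 2 * a * k) * (Real.cosh (a * t))⁻¹ := by
      funext t; rw [hx]; ring
    rw [h1]
    have := (hsech t).const_mul (s * 2 * a * k)
    refine this.congr_deriv (Eq.symm ?_)
    rw [hy, Real.tanh_eq_sinh_div_cosh, ← ha]
    field_simp
  -- y equations
  have hy : ∀ (x y : ℝ → ℝ) (k : ℝ),
      (∀ t, x t = s * (2 * a * (Real.cosh (a * t))⁻¹ * k)) →
      (∀ t, y t = -s * (2 * c * (Real.cosh (a * t))⁻¹ * Real.tanh (a * t) * k)) →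
      ∀ t, HasDerivAt y (x t * z t) t := by
    intro x y k hx hy t
    have h1 : y = fun t => (-s * 2 * c * k) * (Real.sinh (a * t) / (Real.cosh (a * t)) ^ 2) := by
      funext t; rw [hy, Real.tanh_eq_sinh_div_cosh]; field_simp
    rw [h1]
    have := (hrat t).const_mul (-s * 2 * c * k)
    refine this.congr_deriv (Eq.symm ?_)
    rw [hx, hz, ← ha]
    have h2 := hcsq (a * t)
    field_simp
    linear_combination (2*s*a^3*k) * h2
  have hzz : ∀ t, HasDerivAt z (-(x1 t * y1 t + x2 t * y2 t)) t := by
    intro t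
    have h1 : z = fun t => c - 2 * c * ((Real.cosh (a * t))⁻¹) ^ 2 := by
      funext t; rw [hz]; ring
    rw [h1]
    have := (((hsech t).pow 2).const_mul (2 * c)).const_sub c
    refine this.congr_deriv (Eq.symm ?_)
    rw [hx1 t, hx2 t, hy1 t, hy2 t, Real.tanh_eq_sinh_div_cosh]
    have hpy := Real.sin_sq_add_cos_sq θ₀
    field_simp
    have hC' : Real.cosh (a * t) * (Real.cosh (a * t))⁻¹ = 1 := mul_inv_cancel₀ (hcosh _)
    linear_combination (2*a*Real.sinh (a*t)*(Real.sin θ₀^2+Real.cos θ₀^2)) * hs2 + (2*a*Real.sinh (a*t)) * hpy - (2*a*Real.sinh (a*t)) * hC'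
  exact ⟨hx x1 y1 _ hx1 hy1, hy x1 y1 _ hx1 hy1, hx x2 y2 _ hx2 hy2, hy x2 y2 _ hx2 hy2, hzz⟩
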